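/- Let $x_1 < \dots < x_n$ with $x_1 \geq 0$, $n \geq 2$, probabilities $q_k \in (0,1)$ summing to 1, $\lambda > 0$, and let $\mu = \sum_k q_k x_k$. If $x^* \in (x_n - \lambda, x_n)$ satisfies $x^* = \lambda \sum_{k=1}^n \frac{q_k x_k}{\lambda + x^* - x_k}$, then $x^* > \mu$. -/
import Mathlib

/-- Tangent-line inequality for `t ↦ lam*t/(c-t)` (convex on `t < c`). -/
lemma tangent_le (lam c t m : ℝ) (hlam : 0 < lam) (hc : 0 < c)
    (ht : t < c) (hm : m < c) :
    lam * m / (c - m) + lam * c / (c - m) ^ 2 * (t - m) ≤ lam * t / (c - t) := by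
  have h1 : 0 < c - t := by linarith
  have h2 : 0 < c - m := by linarith
  have key : lam * t / (c - t) - (lam * m / (c - m) + lam * c / (c - m) ^ 2 * (t - m))
      = lam * c * (t - m) ^ 2 / ((c - t) * (c - m) ^ 2) := by
    field_simp
    ring
  nlinarith [key, div_nonneg (by positivity : (0:ℝ) ≤ lam * c * (t - m) ^ 2)
    (by positivity : (0:ℝ) ≤ (c - t) * (c - m) ^ 2)]

lemma tangent_lt (lam c t m : ℝ) (hlam : 0 < lam) (hc : 0 < c)
    (ht : t < c) (hm : m < c) (hne : t ≠ m) :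
    lam * m / (c - m) + lam * c / (c - m) ^ 2 * (t - m) < lam * t / (c - t) := by
  have h1 : 0 < c - t := by linarith
  have h2 : 0 < c - m := by linarith
  have h3 : t - m ≠ 0 := sub_ne_zero.mpr hne
  have key : lam * t / (c - t) - (lam * m / (c - m) + lam * c / (c - m) ^ 2 * (t - m))
      = lam * c * (t - m) ^ 2 / ((c - t) * (c - m) ^ 2) := by
    field_simp
    ring
  nlinarith [key, div_pos (by positivity : (0:ℝ) < lam * c * (t - m) ^ 2)
    (by positivity : (0:ℝ) < (c - t) * (c - m) ^ 2)]

/-- The heritable-risk growth rate strictly exceeds the mean birth rate. -/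
theorem stmt_2 (n : ℕ) (hn : 2 ≤ n) (x q : Fin n → ℝ)
    (hx : StrictMono x) (hx0 : 0 ≤ x ⟨0, by omega⟩)
    (hq : ∀ k, q k ∈ Set.Ioo (0 : ℝ) 1) (hqsum : ∑ k, q k = 1)
    (lam : ℝ) (hlam : 0 < lam) (xs : ℝ)
    (hmem : xs ∈ Set.Ioo (x ⟨n - 1, by omega⟩ - lam) (x ⟨n - 1, by omega⟩))
    (heq : xs = lam * ∑ k, q k * x k / (lam + xs - x k)) :
    xs > ∑ k, q k * x k := by
  obtain ⟨hmem1, hmem2⟩ := hmem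
  set last : Fin n := ⟨n - 1, by omega⟩ with hlast
  set fst : Fin n := ⟨0, by omega⟩ with hfst
  set c : ℝ := lam + xs with hc
  set m : ℝ := ∑ k, q k * x k with hm
  have hfl : fst < last := by
    simp only [hfst, hlast, Fin.mk_lt_mk]; omega
  have hx01 : x fst < x last := hx hfl
  have hcpos : 0 < c := by
    have := hx0
    simp only [hc]; linarith
  have hxk_le : ∀ k : Fin n, x k ≤ x last := by
    intro k
    exact hx.monotone (by simp only [hlast, Fin.le_def]; omega)
  have hxk_lt_c : ∀ k : Fin n, x k < c := fun k => by
    have := hxk_le k; simp only [hc]; linarith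
  have hm_lt_c : m < c := by
    have : m ≤ x last := by
      rw [hm]
      calc ∑ k, q k * x k ≤ ∑ k, q k * x last := by
            apply Finset.sum_le_sum
            intro k _
            exact mul_le_mul_of_nonneg_left (hxk_le k) (le_of_lt (hq k).1)
        _ = x last := by rw [← Finset.sum_mul, hqsum, one_mul]
    simp only [hc]; linarith
  -- rewrite heq
  have heq' : xs = ∑ k, q k * (lam * x k / (c - x k)) := by
    rw [heq, Finset.mul_sum]
    apply Finset.sum_congr rfl
    intro k _
    have : lam + xs - x k = c - x k := by simp [hc]
    rw [this]; ring
  -- there is some k with x k ≠ m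
  have hex : ∃ k : Fin n, x k ≠ m := by
    by_contra h
    push_neg at h
    have := (h fst).trans (h last).symm
    exact absurd this (ne_of_lt hx01)
  -- Jensen
  set cc : ℝ := lam * c / (c - m) ^ 2 with hcc
  have hsum : ∑ k, q k * (lam * m / (c - m) + cc * (x k - m))
      < ∑ k, q k * (lam * x k / (c - x k)) := by
    obtain ⟨k0, hk0⟩ := hex
    apply Finset.sum_lt_sum
    · intro k _
      exact mul_le_mul_of_nonneg_left
        (tangent_le lam c (x k) m hlam hcpos (hxk_lt_c k) hm_lt_c) (le_of_lt (hq k).1)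
    · exact ⟨k0, Finset.mem_univ k0,
        mul_lt_mul_of_pos_left
          (tangent_lt lam c (x k0) m hlam hcpos (hxk_lt_c k0) hm_lt_c hk0) (hq k0).1⟩
  have hsumL : ∑ k, q k * (lam * m / (c - m) + cc * (x k - m)) = lam * m / (c - m) := by
    have : ∀ k : Fin n, q k * (lam * m / (c - m) + cc * (x k - m))
        = (lam * m / (c - m) - cc * m) * q k + cc * (q k * x k) := by
      intro k; ring
    simp only [this, Finset.sum_add_distrib, ← Finset.mul_sum, hqsum, ← hm]
    ring
  rw [hsumL, ← heq'] at hsum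
  -- conclude
  have h2 : 0 < c - m := by linarith
  rw [div_lt_iff₀ h2] at hsum
  have : (xs - m) * c > 0 := by
    have : (xs - m) * c = xs * (c - m) - lam * m := by simp only [hc]; ring
    linarith [hsum, this.ge, this.le]
  by_contra h
  push_neg at h
  nlinarith
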